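/- An element b of B(l) satisfies ε₀(b) + 2ε₁(b) + 3ε₂(b) = l if and only if b = (α, β, β, β, β, α) for some nonnegative integers α, β with 2α + 3β ≤ l. That is, the minimal elements of B(l) are exactly {(α, β, β, β, β, α) : α, β ≥ 0, 2α + 3β ≤ l}. -/
import Mathlib


structure V where
  x1 : ℤ
  x2 : ℤ
  x3 : ℤ
  xb3 : ℤ
  xb2 : ℤ
  xb1 : ℤ
deriving DecidableEq

/-- Membership in the perfect crystal `B(l)`: all entries nonnegative,
`x₃ ≡ x̄₃ (mod 2)` and `s(b) ≤ l`. -/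
def inB (l : ℤ) (b : V) : Prop :=
  0 ≤ b.x1 ∧ 0 ≤ b.x2 ∧ 0 ≤ b.x3 ∧ 0 ≤ b.xb3 ∧ 0 ≤ b.xb2 ∧ 0 ≤ b.xb1 ∧
  b.x3 % 2 = b.xb3 % 2 ∧
  b.x1 + b.x2 + (b.x3 + b.xb3) / 2 + b.xb2 + b.xb1 ≤ l

def sB (b : V) : ℤ := b.x1 + b.x2 + (b.x3 + b.xb3) / 2 + b.xb2 + b.xb1
def tB (b : V) : ℤ := b.x2 + (b.x3 + b.xb3) / 2
def z1 (b : V) : ℤ := b.xb1 - b.x1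
def z2 (b : V) : ℤ := b.xb2 - b.xb3
def z3 (b : V) : ℤ := b.x3 - b.x2
def z4 (b : V) : ℤ := (b.xb3 - b.x3) / 2
def maxA (b : V) : ℤ :=
  max 0 (max (z1 b) (max (z1 b + z2 b) (max (z1 b + z2 b + 3 * z4 b)
    (max (z1 b + z2 b + z3 b + 3 * z4 b) (2 * z1 b + z2 b + z3 b + 3 * z4 b)))))
def eps1 (b : V) : ℤ := b.xb1 + max (b.xb3 - b.xb2 + max (b.x2 - b.x3) 0) 0
def phi1 (b : V) : ℤ := b.x1 + max (b.x3 - b.x2 + max (b.xb2 - b.xb3) 0) 0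
def eps2 (b : V) : ℤ := b.xb2 + max (b.x3 - b.xb3) 0 / 2
def phi2 (b : V) : ℤ := b.x2 + max (b.xb3 - b.x3) 0 / 2
def eps0 (l : ℤ) (b : V) : ℤ :=
  l - sB b + maxA b - (2 * z1 b + z2 b + z3 b + 3 * z4 b)
def phi0 (l : ℤ) (b : V) : ℤ := l - sB b + maxA b
def f2 (b : V) : V :=
  if z4 b ≤ 0 then ⟨b.x1, b.x2 - 1, b.x3 + 2, b.xb3, b.xb2, b.xb1⟩
  else ⟨b.x1, b.x2, b.x3, b.xb3 - 2, b.xb2 + 1, b.xb1⟩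
def e2 (b : V) : V :=
  if 0 ≤ z4 b then ⟨b.x1, b.x2, b.x3, b.xb3 + 2, b.xb2 - 1, b.xb1⟩
  else ⟨b.x1, b.x2 + 1, b.x3 - 2, b.xb3, b.xb2, b.xb1⟩
def f1 (b : V) : V :=
  if max (z2 b) 0 ≤ -z3 b then ⟨b.x1 - 1, b.x2 + 1, b.x3, b.xb3, b.xb2, b.xb1⟩
  else if z2 b ≤ 0 ∧ 0 < z3 b then ⟨b.x1, b.x2, b.x3 - 1, b.xb3 + 1, b.xb2, b.xb1⟩
  else ⟨b.x1, b.x2, b.x3, b.xb3, b.xb2 - 1, b.xb1 + 1⟩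
def e1 (b : V) : V :=
  if max (-z3 b) 0 ≤ z2 b then ⟨b.x1, b.x2, b.x3, b.xb3, b.xb2 + 1, b.xb1 - 1⟩
  else if z2 b < 0 ∧ 0 ≤ z3 b then ⟨b.x1, b.x2, b.x3 + 1, b.xb3 - 1, b.xb2, b.xb1⟩
  else ⟨b.x1 + 1, b.x2 - 1, b.x3, b.xb3, b.xb2, b.xb1⟩

set_option maxHeartbeats 4000000 in
theorem stmt5 (l : ℤ) (hl : 0 < l) (b : V) (hb : inB l b) :
    eps0 l b + 2 * eps1 b + 3 * eps2 b = l ↔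
      ∃ α β : ℤ, 0 ≤ α ∧ 0 ≤ β ∧ 2 * α + 3 * β ≤ l ∧
        b = ⟨α, β, β, β, β, α⟩ := by
  obtain ⟨x1, x2, x3, xb3, xb2, xb1⟩ := b
  obtain ⟨h1, h2, h3, h4, h5, h6, h7, h8⟩ := hb
  simp only [inB, sB, eps0, eps1, eps2, maxA, z1, z2, z3, z4, V.mk.injEq] at *
  constructor
  · intro h
    have key : 0 ≤ x1 ∧ 0 ≤ x2 ∧ 2 * x1 + 3 * x2 ≤ l ∧ x3 = x2 ∧ xb3 = x2 ∧
        xb2 = x2 ∧ xb1 = x1 := by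
      simp only [max_def] at h
      split_ifs at h <;> omega
    exact ⟨x1, x2, key.1, key.2.1, key.2.2.1, rfl, rfl, key.2.2.2.1,
      key.2.2.2.2.1, key.2.2.2.2.2.1, key.2.2.2.2.2.2⟩
  · rintro ⟨α, β, ha, hbb, hab, rfl, rfl, rfl, rfl, rfl, rfl⟩
    simp only [max_def]
    split_ifs <;> omega
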